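/- arXiv:2210.09115 — 4 statements merged into one kernel-verified Lean document; each statement's English description precedes it below -/
import Mathlib

section
/- For $p_1, \ldots, p_d \geq 2$ and $\ell \geq 1$, the ratio $|\mathcal{K}_{N_1 \times \cdots \times N_d; \ell}| / (N_1 \cdots N_d)$ tends to $(P-1)^2 / P^{\ell+1}$ as $\min_j N_j \to \infty$, where $P = p_1 \cdots p_d$. -/
open Finset


lemma prod_abs_diff_le {ι : Type*} (s : Finset ι) (a b : ι → ℝ)
    (ha : ∀ i ∈ s, a i ∈ Set.Icc (0:ℝ) 1) (hb : ∀ i ∈ s, b i ∈ Set.Icc (0:ℝ) 1) :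
    |∏ i ∈ s, a i - ∏ i ∈ s, b i| ≤ ∑ i ∈ s, |a i - b i| := by
  induction s using Finset.cons_induction with
  | empty => simp
  | cons j s hj ih =>
    rw [prod_cons, prod_cons, sum_cons]
    obtain ⟨ha0, ha1⟩ := ha j (mem_cons_self ..)
    obtain ⟨hb0, hb1⟩ := hb j (mem_cons_self ..)
    have h1 : ∀ i ∈ s, a i ∈ Set.Icc (0:ℝ) 1 := fun i hi => ha i (mem_cons_of_mem hi)
    have h2 : ∀ i ∈ s, b i ∈ Set.Icc (0:ℝ) 1 := fun i hi => hb i (mem_cons_of_mem hi)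
    have hpa0 : (0:ℝ) ≤ ∏ i ∈ s, a i := prod_nonneg fun i hi => (h1 i hi).1
    have hpa1 : ∏ i ∈ s, a i ≤ 1 := prod_le_one (fun i hi => (h1 i hi).1) (fun i hi => (h1 i hi).2)
    have key : a j * ∏ i ∈ s, a i - b j * ∏ i ∈ s, b i
        = (a j - b j) * ∏ i ∈ s, a i + b j * (∏ i ∈ s, a i - ∏ i ∈ s, b i) := by ring
    rw [key]
    calc |(a j - b j) * ∏ i ∈ s, a i + b j * (∏ i ∈ s, a i - ∏ i ∈ s, b i)|
        ≤ |(a j - b j) * ∏ i ∈ s, a i| + |b j * (∏ i ∈ s, a i - ∏ i ∈ s, b i)| := abs_add_le _ _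
      _ = |a j - b j| * |∏ i ∈ s, a i| + |b j| * |∏ i ∈ s, a i - ∏ i ∈ s, b i| := by
          rw [abs_mul, abs_mul]
      _ ≤ |a j - b j| * 1 + 1 * (∑ i ∈ s, |a i - b i|) := by
          gcongr
          · rw [abs_of_nonneg hpa0]; exact hpa1
          · rw [abs_of_nonneg hb0]; exact hb1
          · exact ih h1 h2
      _ = |a j - b j| + ∑ i ∈ s, |a i - b i| := by ring

lemma floor_div_bound (q N : ℕ) (hq : 1 ≤ q) (hN : 1 ≤ N) :
    |((N / q : ℕ) : ℝ) / N - 1 / q| ≤ 1 / N := by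
  have hq0 : (0:ℝ) < q := by exact_mod_cast hq
  have hN0 : (0:ℝ) < N := by exact_mod_cast hN
  have h1 : (q:ℝ) * ((N / q : ℕ):ℝ) ≤ N := by
    have h : ((N / q : ℕ):ℝ) * q ≤ N := by exact_mod_cast Nat.div_mul_le_self N q
    linarith
  have h2 : (N:ℝ) < q * ((N / q : ℕ):ℝ) + q := by
    have hm : (q:ℝ) * ((N / q : ℕ):ℝ) + ((N % q : ℕ):ℝ) = N := by
      exact_mod_cast Nat.div_add_mod N q
    have hlt : ((N % q : ℕ):ℝ) < q := by exact_mod_cast Nat.mod_lt _ hq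
    linarith
  rw [abs_le]
  constructor
  · have : 1 / (q:ℝ) - 1 / N ≤ ((N / q : ℕ):ℝ) / N := by
      rw [div_sub_div _ _ (ne_of_gt hq0) (ne_of_gt hN0), div_le_div_iff₀ (by positivity) hN0]
      nlinarith
    linarith
  · have : ((N / q : ℕ):ℝ) / N ≤ 1 / q := by
      rw [div_le_div_iff₀ hN0 hq0]
      nlinarith
    have : (0:ℝ) < 1/N := by positivity
    linarith


-- count of tuples in box all of whose coordinates are divisible
lemma card_all_dvd {d : ℕ} (p : Fin d → ℕ) (hp : ∀ j, 2 ≤ p j) (n : Fin d → ℕ) :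
    ((Fintype.piFinset (fun j => Finset.Icc 1 (n j))).filter
      (fun i => ∀ j, p j ∣ i j)).card = ∏ j, n j / p j := by
  classical
  have hbox : (Fintype.piFinset (fun j => Finset.Icc 1 (n j / p j))).card
      = ∏ j, n j / p j := by
    simp [Fintype.card_piFinset]
  rw [← hbox]
  apply Finset.card_nbij' (fun i => fun j => i j / p j) (fun k => fun j => k j * p j)
  · intro i hi
    simp only [Finset.mem_coe, mem_filter, Fintype.mem_piFinset, mem_Icc] at hi ⊢
    obtain ⟨h1, h2⟩ := hi
    intro j
    obtain ⟨hj1, hj2⟩ := h1 j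
    have hd := h2 j
    have hp0 : 0 < p j := by have := hp j; omega
    constructor
    · exact Nat.one_le_div_iff hp0 |>.2 (Nat.le_of_dvd (by omega) hd)
    · exact Nat.div_le_div_right hj2
  · intro k hk
    simp only [Finset.mem_coe, mem_filter, Fintype.mem_piFinset, mem_Icc] at hk ⊢
    constructor
    · intro j
      obtain ⟨hj1, hj2⟩ := hk j
      have hp0 : 0 < p j := by have := hp j; omega
      constructor
      · exact Nat.one_le_iff_ne_zero.2 (by positivity)
      · exact (Nat.le_div_iff_mul_le hp0).1 hj2
    · intro j
      exact dvd_mul_left (p j) (k j)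
  · intro i hi
    simp only [Finset.mem_coe, mem_filter, Fintype.mem_piFinset, mem_Icc] at hi
    funext j
    exact Nat.div_mul_cancel (hi.2 j)
  · intro k hk
    funext j
    have hp0 : 0 < p j := by have := hp j; omega
    exact Nat.mul_div_cancel _ hp0

open Classical in
lemma card_level {d : ℕ} (p : Fin d → ℕ) (hp : ∀ j, 2 ≤ p j) (N : Fin d → ℕ) (s : ℕ) :
    ((Fintype.piFinset (fun j => Finset.Icc 1 (N j))).filter
      (fun i => (∃ j, ¬ p j ∣ i j) ∧ ∀ j, i j * p j ^ s ≤ N j)).card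
      + ∏ j, N j / p j ^ (s+1) = ∏ j, N j / p j ^ s := by
  have hps : ∀ j, 0 < p j ^ s := fun j => pow_pos (by have := hp j; omega) s
  have hset : ((Fintype.piFinset (fun j => Finset.Icc 1 (N j))).filter
      (fun i => (∃ j, ¬ p j ∣ i j) ∧ ∀ j, i j * p j ^ s ≤ N j))
      = ((Fintype.piFinset (fun j => Finset.Icc 1 (N j / p j ^ s))).filter
      (fun i => ∃ j, ¬ p j ∣ i j)) := by
    ext i
    simp only [mem_filter, Fintype.mem_piFinset, mem_Icc, Nat.le_div_iff_mul_le (hps _)]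
    constructor
    · rintro ⟨h1, h2, h3⟩
      exact ⟨fun j => ⟨(h1 j).1, h3 j⟩, h2⟩
    · rintro ⟨h1, h2⟩
      refine ⟨fun j => ⟨(h1 j).1, ?_⟩, h2, fun j => (h1 j).2⟩
      calc i j ≤ i j * p j ^ s := Nat.le_mul_of_pos_right _ (hps j)
        _ ≤ N j := (h1 j).2
  rw [hset]
  have hkey := Finset.card_filter_add_card_filter_not
    (s := Fintype.piFinset (fun j => Finset.Icc 1 (N j / p j ^ s)))
    (p := fun i => ∃ j, ¬ p j ∣ i j)
  have hneg : ((Fintype.piFinset (fun j => Finset.Icc 1 (N j / p j ^ s))).filter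
      (fun i => ¬ ∃ j, ¬ p j ∣ i j)).card = ∏ j, N j / p j ^ (s+1) := by
    have : ((Fintype.piFinset (fun j => Finset.Icc 1 (N j / p j ^ s))).filter
        (fun i => ¬ ∃ j, ¬ p j ∣ i j))
        = ((Fintype.piFinset (fun j => Finset.Icc 1 (N j / p j ^ s))).filter
        (fun i => ∀ j, p j ∣ i j)) := by
      apply Finset.filter_congr
      intro i _
      simp
    rw [this, card_all_dvd p hp]
    apply Finset.prod_congr rfl
    intro j _
    rw [Nat.div_div_eq_div_mul, ← pow_succ]
  have hbox : (Fintype.piFinset (fun j => Finset.Icc 1 (N j / p j ^ s))).card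
      = ∏ j, N j / p j ^ s := by simp [Fintype.card_piFinset]
  rw [hneg, hbox] at hkey
  exact hkey


open Classical in
lemma inner_card {d : ℕ} (hd : 1 ≤ d) (p : Fin d → ℕ) (hp : ∀ j, 2 ≤ p j)
    (N : Fin d → ℕ) (i : Fin d → ℕ) (hi : ∀ j, 1 ≤ i j ∧ i j ≤ N j) (t : ℕ) :
    ((Fintype.piFinset (fun j => Finset.Icc 1 (N j))).filter
      (fun x => ∃ m : ℕ, ∀ j, x j = i j * p j ^ m)).card = t + 1
    ↔ ((∀ j, i j * p j ^ t ≤ N j) ∧ ¬ (∀ j, i j * p j ^ (t+1) ≤ N j)) := by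
  set Q : ℕ → Prop := fun m => ∀ j, i j * p j ^ m ≤ N j with hQ
  have hmono : ∀ m, Q (m+1) → Q m := by
    intro m h j
    calc i j * p j ^ m ≤ i j * p j ^ (m+1) :=
          Nat.mul_le_mul_left _ (Nat.pow_le_pow_right (by have := hp j; omega) (by omega))
      _ ≤ N j := h j
  set j0 : Fin d := ⟨0, hd⟩
  have hnotall : ∃ m, ¬ Q m := by
    refine ⟨N j0, fun h => ?_⟩
    have h1 := h j0
    have h2 : N j0 < 2 ^ N j0 := Nat.lt_two_pow_self
    have h3 : 2 ^ N j0 ≤ p j0 ^ N j0 := Nat.pow_le_pow_left (hp j0) _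
    have h4 : p j0 ^ N j0 ≤ i j0 * p j0 ^ N j0 := Nat.le_mul_of_pos_left _ (hi j0).1
    omega
  set L := Nat.find hnotall with hL
  have hQiff : ∀ m, Q m ↔ m < L := by
    intro m
    constructor
    · intro hQm
      by_contra hcon
      push_neg at hcon
      have : ∀ n, L ≤ n → ¬ Q n := by
        intro n hn
        induction n, hn using Nat.le_induction with
        | base => exact Nat.find_spec hnotall
        | succ n hn ih => exact fun h => ih (hmono n h)
      exact this m hcon hQm
    · intro hm
      by_contra hcon
      exact Nat.find_min hnotall hm hcon
  have himg : ((Fintype.piFinset (fun j => Finset.Icc 1 (N j))).filter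
      (fun x => ∃ m : ℕ, ∀ j, x j = i j * p j ^ m))
      = (Finset.range L).image (fun m => fun j => i j * p j ^ m) := by
    ext x
    simp only [mem_filter, Fintype.mem_piFinset, mem_Icc, mem_image, mem_range]
    constructor
    · rintro ⟨h1, m, hm⟩
      refine ⟨m, ?_, ?_⟩
      · rw [← hQiff]
        intro j
        rw [← hm j]
        exact (h1 j).2
      · funext j
        exact (hm j).symm
    · rintro ⟨m, hm, rfl⟩
      have hQm : Q m := (hQiff m).2 hm
      refine ⟨fun j => ⟨?_, hQm j⟩, m, fun j => rfl⟩
      exact Nat.mul_pos (hi j).1 (pow_pos (by have := hp j; omega) m)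
  rw [himg, Finset.card_image_of_injOn, Finset.card_range]
  · constructor
    · intro h
      have h1 : Q t := (hQiff t).2 (by omega)
      have h2 : ¬ Q (t+1) := fun hq => by have := (hQiff (t+1)).1 hq; omega
      exact ⟨h1, h2⟩
    · rintro ⟨h1, h2⟩
      have ha := (hQiff t).1 h1
      have hb : ¬ (t + 1 < L) := fun h => h2 ((hQiff (t+1)).2 h)
      omega
  · intro m _ m' _ hmm
    have := congrFun hmm j0
    simp only at this
    have hi0 : 0 < i j0 := (hi j0).1
    have : p j0 ^ m = p j0 ^ m' := Nat.eq_of_mul_eq_mul_left hi0 this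
    exact Nat.pow_right_injective (hp j0) this

open Classical in
lemma card_main {d : ℕ} (hd : 1 ≤ d) (p : Fin d → ℕ) (hp : ∀ j, 2 ≤ p j)
    (N : Fin d → ℕ) (t : ℕ) :
    ((Fintype.piFinset (fun j => Finset.Icc 1 (N j))).filter (fun i =>
      (∃ j, ¬ p j ∣ i j) ∧
      ((Fintype.piFinset (fun j => Finset.Icc 1 (N j))).filter
        (fun x => ∃ m : ℕ, ∀ j, x j = i j * p j ^ m)).card = t + 1)).card
      + ∏ j, N j / p j ^ (t+1) + ∏ j, N j / p j ^ (t+1)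
      = ∏ j, N j / p j ^ t + ∏ j, N j / p j ^ (t+2) := by
  set C : ℕ → Finset (Fin d → ℕ) := fun s =>
    (Fintype.piFinset (fun j => Finset.Icc 1 (N j))).filter
      (fun i => (∃ j, ¬ p j ∣ i j) ∧ ∀ j, i j * p j ^ s ≤ N j) with hC
  have hsub : C (t+1) ⊆ C t := by
    intro i hi
    simp only [hC, mem_filter, Fintype.mem_piFinset, mem_Icc] at hi ⊢
    refine ⟨hi.1, hi.2.1, fun j => ?_⟩
    calc i j * p j ^ t ≤ i j * p j ^ (t+1) :=
          Nat.mul_le_mul_left _ (Nat.pow_le_pow_right (by have := hp j; omega) (by omega))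
      _ ≤ N j := hi.2.2 j
  have hT : ((Fintype.piFinset (fun j => Finset.Icc 1 (N j))).filter (fun i =>
      (∃ j, ¬ p j ∣ i j) ∧
      ((Fintype.piFinset (fun j => Finset.Icc 1 (N j))).filter
        (fun x => ∃ m : ℕ, ∀ j, x j = i j * p j ^ m)).card = t + 1))
      = C t \ C (t+1) := by
    ext i
    simp only [hC, mem_sdiff, mem_filter, Fintype.mem_piFinset, mem_Icc]
    constructor
    · rintro ⟨h1, h2, h3⟩
      rw [inner_card hd p hp N i h1 t] at h3
      exact ⟨⟨h1, h2, h3.1⟩, fun hcon => h3.2 hcon.2.2⟩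
    · rintro ⟨⟨h1, h2, h3⟩, h4⟩
      refine ⟨h1, h2, ?_⟩
      rw [inner_card hd p hp N i h1 t]
      exact ⟨h3, fun hcon => h4 ⟨h1, h2, hcon⟩⟩
  rw [hT, card_sdiff_of_subset hsub]
  have e1 := card_level p hp N t
  have e2 := card_level p hp N (t+1)
  have hle : (C (t+1)).card ≤ (C t).card := Finset.card_le_card hsub
  have e1' : (C t).card + ∏ j, N j / p j ^ (t+1) = ∏ j, N j / p j ^ t := e1
  have e2' : (C (t+1)).card + ∏ j, N j / p j ^ (t+2) = ∏ j, N j / p j ^ (t+1) := e2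
  set a := (C t).card
  set b := (C (t+1)).card
  set m0 := ∏ j, N j / p j ^ t
  set m1 := ∏ j, N j / p j ^ (t+1)
  set m2 := ∏ j, N j / p j ^ (t+2)
  omega


open Classical in
/-- `d`-dimensional density: `|K_{N₁×⋯×N_d;ℓ}|/(N₁⋯N_d) → (P-1)²/P^(ℓ+1)` with `P = p₁⋯p_d`,
as `min_j N_j → ∞`. -/
theorem stmt5 (d : ℕ) (hd : 1 ≤ d) (p : Fin d → ℕ) (hp : ∀ j, 2 ≤ p j)
    (ℓ : ℕ) (hℓ : 1 ≤ ℓ) :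
    ∀ ε > (0 : ℝ), ∃ M : ℕ, ∀ N : Fin d → ℕ, (∀ j, M ≤ N j) →
      |((((Fintype.piFinset (fun j => Finset.Icc 1 (N j))).filter (fun i =>
          (∃ j, ¬ p j ∣ i j) ∧
          ((Fintype.piFinset (fun j => Finset.Icc 1 (N j))).filter
            (fun x => ∃ m : ℕ, ∀ j, x j = i j * p j ^ m)).card = ℓ)).card : ℝ)
          / ∏ j, (N j : ℝ))
        - ((∏ j, (p j : ℝ)) - 1) ^ 2 / (∏ j, (p j : ℝ)) ^ (ℓ + 1)| < ε := by
  obtain ⟨t, rfl⟩ : ∃ t, ℓ = t + 1 := ⟨ℓ - 1, by omega⟩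
  intro ε hε
  obtain ⟨M₀, hM₀⟩ := exists_nat_gt ((4 * d + 1) / ε)
  refine ⟨M₀ + 1, fun N hN => ?_⟩
  have hN1 : ∀ j, 1 ≤ N j := fun j => le_trans (by omega) (hN j)
  have hNpos : ∀ j, (0:ℝ) < N j := fun j => by exact_mod_cast hN1 j
  have hprodN : (0:ℝ) < ∏ j, (N j : ℝ) := prod_pos fun j _ => hNpos j
  -- the three real quantities
  set m : ℕ → ℝ := fun s => ((∏ j, N j / p j ^ (t + s) : ℕ) : ℝ) with hm
  -- cast the counting formula
  have hcard := card_main hd p hp N t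
  have hcardR : ((((Fintype.piFinset (fun j => Finset.Icc 1 (N j))).filter (fun i =>
      (∃ j, ¬ p j ∣ i j) ∧
      ((Fintype.piFinset (fun j => Finset.Icc 1 (N j))).filter
        (fun x => ∃ m : ℕ, ∀ j, x j = i j * p j ^ m)).card = t + 1)).card : ℝ))
      = m 0 - 2 * m 1 + m 2 := by
    have := congrArg (fun n : ℕ => (n : ℝ)) hcard
    push_cast at this
    simp only [hm]
    push_cast
    have h0 : t + 0 = t := by ring
    have h1 : t + 1 = t + 1 := rfl
    rw [h0]
    linarith
  rw [hcardR]
  -- per-level error bound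
  have herr : ∀ s : ℕ, |m s / ∏ j, (N j : ℝ) - ∏ j, (1 / (p j : ℝ) ^ (t + s))|
      ≤ d * (1 / (M₀ + 1 : ℝ)) := by
    intro s
    have hq : ∀ j, 1 ≤ p j ^ (t + s) := fun j => Nat.one_le_pow _ _ (lt_of_lt_of_le Nat.zero_lt_two (hp j))
    have hratio : m s / ∏ j, (N j : ℝ)
        = ∏ j, (((N j / p j ^ (t + s) : ℕ) : ℝ) / (N j : ℝ)) := by
      rw [hm]
      push_cast
      rw [Finset.prod_div_distrib]
    rw [hratio]
    have hbound := prod_abs_diff_le Finset.univ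
      (fun j => ((N j / p j ^ (t + s) : ℕ) : ℝ) / (N j : ℝ))
      (fun j => 1 / (p j : ℝ) ^ (t + s))
      (fun j _ => ⟨by positivity, by
        rw [div_le_one (hNpos j)]
        exact_mod_cast Nat.div_le_self _ _⟩)
      (fun j _ => ⟨by positivity, by
        have : (1:ℝ) ≤ (p j : ℝ) ^ (t + s) := by exact_mod_cast hq j
        rw [div_le_one (by linarith)]
        linarith⟩)
    refine le_trans hbound ?_
    have hterm : ∀ j : Fin d, |((N j / p j ^ (t + s) : ℕ) : ℝ) / (N j : ℝ)
        - 1 / (p j : ℝ) ^ (t + s)| ≤ 1 / (M₀ + 1 : ℝ) := by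
      intro j
      have h1 := floor_div_bound (p j ^ (t + s)) (N j) (hq j) (hN1 j)
      push_cast at h1
      refine le_trans h1 ?_
      apply one_div_le_one_div_of_le (by positivity)
      exact_mod_cast hN j
    calc ∑ j : Fin d, |((N j / p j ^ (t + s) : ℕ) : ℝ) / (N j : ℝ)
        - 1 / (p j : ℝ) ^ (t + s)| ≤ ∑ _j : Fin d, 1 / (M₀ + 1 : ℝ) :=
          Finset.sum_le_sum fun j _ => hterm j
      _ = d * (1 / (M₀ + 1 : ℝ)) := by simp [mul_comm]
  -- rewrite the target
  set P : ℝ := ∏ j, (p j : ℝ) with hPdef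
  have hP0 : (0:ℝ) < P := by
    rw [hPdef]
    exact Finset.prod_pos fun j _ => by
      exact_mod_cast Nat.lt_of_lt_of_le Nat.zero_lt_two (hp j)
  have hPi : ∀ s : ℕ, ∏ j, (1 / (p j : ℝ) ^ (t + s)) = 1 / P ^ (t + s) := by
    intro s
    rw [Finset.prod_div_distrib, hPdef, ← Finset.prod_pow]
    simp
  have htarget : (P - 1) ^ 2 / P ^ (t + 1 + 1)
      = 1 / P ^ (t + 0) - 2 * (1 / P ^ (t + 1)) + 1 / P ^ (t + 2) := by
    have hPne : P ≠ 0 := ne_of_gt hP0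
    field_simp
    ring
  rw [htarget]
  have e0 := herr 0
  have e1 := herr 1
  have e2 := herr 2
  rw [hPi 0] at e0
  rw [hPi 1] at e1
  rw [hPi 2] at e2
  have key : |(m 0 - 2 * m 1 + m 2) / ∏ j, (N j : ℝ)
      - (1 / P ^ (t + 0) - 2 * (1 / P ^ (t + 1)) + 1 / P ^ (t + 2))|
      ≤ 4 * d * (1 / (M₀ + 1 : ℝ)) := by
    have hsplit : (m 0 - 2 * m 1 + m 2) / ∏ j, (N j : ℝ)
        - (1 / P ^ (t + 0) - 2 * (1 / P ^ (t + 1)) + 1 / P ^ (t + 2))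
        = (m 0 / ∏ j, (N j : ℝ) - 1 / P ^ (t + 0))
          - 2 * (m 1 / ∏ j, (N j : ℝ) - 1 / P ^ (t + 1))
          + (m 2 / ∏ j, (N j : ℝ) - 1 / P ^ (t + 2)) := by
      field_simp
      ring
    rw [hsplit]
    have := abs_sub_abs_le_abs_sub (m 0 / ∏ j, (N j : ℝ) - 1 / P ^ (t + 0)) 0
    calc |(m 0 / ∏ j, (N j : ℝ) - 1 / P ^ (t + 0))
          - 2 * (m 1 / ∏ j, (N j : ℝ) - 1 / P ^ (t + 1))
          + (m 2 / ∏ j, (N j : ℝ) - 1 / P ^ (t + 2))|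
        ≤ |m 0 / ∏ j, (N j : ℝ) - 1 / P ^ (t + 0)|
          + 2 * |m 1 / ∏ j, (N j : ℝ) - 1 / P ^ (t + 1)|
          + |m 2 / ∏ j, (N j : ℝ) - 1 / P ^ (t + 2)| := by
          have h1 := abs_add_le ((m 0 / ∏ j, (N j : ℝ) - 1 / P ^ (t + 0))
            - 2 * (m 1 / ∏ j, (N j : ℝ) - 1 / P ^ (t + 1)))
            (m 2 / ∏ j, (N j : ℝ) - 1 / P ^ (t + 2))
          have h2 := abs_sub (m 0 / ∏ j, (N j : ℝ) - 1 / P ^ (t + 0))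
            (2 * (m 1 / ∏ j, (N j : ℝ) - 1 / P ^ (t + 1)))
          rw [abs_mul] at h2
          simp only [abs_two] at h2
          linarith
      _ ≤ d * (1 / (M₀ + 1 : ℝ)) + 2 * (d * (1 / (M₀ + 1 : ℝ))) + d * (1 / (M₀ + 1 : ℝ)) := by
          gcongr
      _ = 4 * d * (1 / (M₀ + 1 : ℝ)) := by ring
  refine lt_of_le_of_lt key ?_
  have hM1 : (0:ℝ) < (M₀ : ℝ) + 1 := by positivity
  rw [div_lt_iff₀ hε] at hM₀
  have : 4 * (d:ℝ) * (1 / (M₀ + 1 : ℝ)) < ε ↔ 4 * (d:ℝ) < ε * (M₀ + 1) := by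
    rw [mul_one_div, div_lt_iff₀ hM1]
  rw [this]
  nlinarith
end

section
/- Let $p_1, p_2 \geq 2$ and suppose $\log|\Omega_{i}| = \log\|A^{i-1}\|_1$ where $A$ is a primitive (irreducible aperiodic) nonnegative integer matrix with Perron eigenvalue $\lambda_A$, and $\|M\|_1$ denotes the sum of all entries. Let $h = (1 - \tfrac{1}{p_1p_2})(p_1p_2 - 1)\sum_{i=1}^{\infty}\frac{\log|\Omega_i|}{(p_1p_2)^i}$ and $x_n = p_1^{k_1 n}$, $y_n = p_2^{k_2 n}$ with $k_1 \geq k_2 \geq 1$. Then $\lim_{n\to\infty} \frac{\log|\mathcal{P}(\mathbb{Z}_{x_n, y_n}, X^{\mathbf{p}}_\Omega)| - x_n y_n h}{r_n \cdot x_n y_n / (p_1 p_2)^{r_n}} = -\left(1 - \frac{1}{p_1 p_2}\right)\log \lambda_A$, where $r_n = k_2 n$ and $\log|\mathcal{P}(\mathbb{Z}_{x_n,y_n}, X^{\mathbf{p}}_\Omega)| = (1-\tfrac{1}{p_1p_2})(p_1p_2-1)\sum_{i=1}^{r_n} \frac{x_n y_n}{(p_1p_2)^i}\log|\Omega_i|$.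 -/
lemma aux_bound12 (m : ℕ) (hm : 1 ≤ m) (A : Matrix (Fin m) (Fin m) ℝ)
    (hA0 : ∀ i j, 0 ≤ A i j)
    (hprim : ∃ N : ℕ, ∀ i j, 0 < (A ^ N) i j)
    (lam : ℝ) (l rv : Fin m → ℝ) (hl : ∀ i, 0 < l i) (hrv : ∀ i, 0 < rv i)
    (hleft : Matrix.vecMul l A = lam • l) (hright : A.mulVec rv = lam • rv)
    (c : ℕ → ℝ) (hc : ∀ i, 1 ≤ i → c i = Real.log (∑ k, ∑ j, (A ^ (i - 1)) k j)) :
    ∃ M : ℝ, ∀ i : ℕ, |c (i + 1) - i * Real.log lam| ≤ M := by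
  haveI : NeZero m := ⟨by omega⟩
  have hne : (Finset.univ : Finset (Fin m)).Nonempty := Finset.univ_nonempty
  have hpow0 : ∀ n : ℕ, ∀ i j, 0 ≤ (A ^ n) i j := by
    intro n
    induction n with
    | zero => intro i j; simp [Matrix.one_apply]; split <;> norm_num
    | succ n ih =>
      intro i j
      rw [pow_succ, Matrix.mul_apply]
      exact Finset.sum_nonneg fun k _ => mul_nonneg (ih i k) (hA0 k j)
  have hleftn : ∀ n : ℕ, Matrix.vecMul l (A ^ n) = lam ^ n • l := by
    intro n
    induction n with
    | zero => simp
    | succ n ih =>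
      rw [pow_succ, ← Matrix.vecMul_vecMul, ih, Matrix.smul_vecMul, hleft, smul_smul,
        ← pow_succ]
  have hrightn : ∀ n : ℕ, (A ^ n).mulVec rv = lam ^ n • rv := by
    intro n
    induction n with
    | zero => simp
    | succ n ih =>
      rw [pow_succ', ← Matrix.mulVec_mulVec, ih, Matrix.mulVec_smul, hright, smul_smul,
        ← pow_succ]
  -- the total-entry sum
  set S : ℕ → ℝ := fun n => ∑ k, ∑ j, (A ^ n) k j with hS
  obtain ⟨k0, -, hk0⟩ := Finset.exists_min_image Finset.univ l hne
  obtain ⟨j0, -, hj0⟩ := Finset.exists_max_image Finset.univ rv hne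
  have hupper : ∀ n, S n * l k0 ≤ lam ^ n * ∑ j, l j := by
    intro n
    have h1 : S n * l k0 = ∑ k, ∑ j, (A ^ n) k j * l k0 := by
      simp [hS, Finset.sum_mul]
    have h2 : ∀ k ∈ Finset.univ, ∑ j : Fin m, (A ^ n) k j * l k0
        ≤ ∑ j : Fin m, (A ^ n) k j * l k := by
      intro k _
      exact Finset.sum_le_sum fun j _ =>
        mul_le_mul_of_nonneg_left (hk0 k (Finset.mem_univ k)) (hpow0 n k j)
    have h3 : (∑ k, ∑ j, (A ^ n) k j * l k) = ∑ j, (Matrix.vecMul l (A ^ n)) j := by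
      rw [Finset.sum_comm]
      refine Finset.sum_congr rfl fun j _ => ?_
      simp [Matrix.vecMul, dotProduct, mul_comm]
    calc S n * l k0 = ∑ k, ∑ j, (A ^ n) k j * l k0 := h1
      _ ≤ ∑ k, ∑ j, (A ^ n) k j * l k := Finset.sum_le_sum h2
      _ = ∑ j, (Matrix.vecMul l (A ^ n)) j := h3
      _ = lam ^ n * ∑ j, l j := by rw [hleftn n]; simp [Finset.mul_sum]
  have hlower : ∀ n, lam ^ n * ∑ k, rv k ≤ S n * rv j0 := by
    intro n
    have h1 : S n * rv j0 = ∑ k, ∑ j, (A ^ n) k j * rv j0 := by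
      simp [hS, Finset.sum_mul]
    have h3 : (∑ k, ∑ j, (A ^ n) k j * rv j) = ∑ k, ((A ^ n).mulVec rv) k := by
      refine Finset.sum_congr rfl fun k _ => ?_
      simp [Matrix.mulVec, dotProduct]
    calc lam ^ n * ∑ k, rv k = ∑ k, ((A ^ n).mulVec rv) k := by
          rw [hrightn n]; simp [Finset.mul_sum]
      _ = ∑ k, ∑ j, (A ^ n) k j * rv j := h3.symm
      _ ≤ ∑ k, ∑ j, (A ^ n) k j * rv j0 := by
          refine Finset.sum_le_sum fun k _ => Finset.sum_le_sum fun j _ =>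
            mul_le_mul_of_nonneg_left (hj0 j (Finset.mem_univ j)) (hpow0 n k j)
      _ = S n * rv j0 := h1.symm
  have hlam0 : 0 ≤ lam := by
    have i0 : Fin m := ⟨0, by omega⟩
    have h1 : lam * rv i0 = ∑ j, A i0 j * rv j := by
      have := congrFun hright i0
      simp [Matrix.mulVec, dotProduct] at this
      simpa using this.symm
    have h2 : 0 ≤ lam * rv i0 := by
      rw [h1]
      exact Finset.sum_nonneg fun j _ => mul_nonneg (hA0 i0 j) (hrv j).le
    exact nonneg_of_mul_nonneg_right (by rwa [mul_comm] at h2) (hrv i0)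
  rcases eq_or_lt_of_le hlam0 with hlam | hlam
  · -- degenerate case lam = 0
    have hA : A = 0 := by
      ext i j
      have h1 : (A.mulVec rv) i = 0 := by rw [hright, ← hlam]; simp
      have h1' : ∑ j, A i j * rv j = 0 := by
        simpa [Matrix.mulVec, dotProduct] using h1
      have h2 := (Finset.sum_eq_zero_iff_of_nonneg
        (fun j _ => mul_nonneg (hA0 i j) (hrv j).le)).1 h1' j (Finset.mem_univ j)
      have h3 := (hrv j).ne'
      simp only [Matrix.zero_apply]
      rcases mul_eq_zero.1 h2 with h | h
      · exact h
      · exact absurd h h3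
    obtain ⟨N, hN⟩ := hprim
    have hm1 : m = 1 := by
      rcases Nat.eq_zero_or_pos N with h0 | hNpos
      · subst h0
        by_contra hm1
        have hm2 : 2 ≤ m := by omega
        have := hN ⟨0, by omega⟩ ⟨1, by omega⟩
        rw [pow_zero, Matrix.one_apply_ne (by simp [Fin.ext_iff])] at this
        exact absurd this (by norm_num)
      · exfalso
        have i0 : Fin m := ⟨0, by omega⟩
        have := hN i0 i0
        rw [hA, zero_pow hNpos.ne'] at this
        exact absurd this (by simp)
    subst hm1
    have hczero : ∀ i : ℕ, c (i + 1) = 0 := by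
      intro i
      rcases i with _ | i
      · rw [hc 1 le_rfl]
        norm_num [Matrix.one_apply]
      · rw [hc (i + 2) (by omega)]
        have : (i + 2) - 1 = i + 1 := by omega
        rw [this, hA, zero_pow (by omega : i + 1 ≠ 0)]
        simp
    refine ⟨0, fun i => ?_⟩
    rw [hczero i, ← hlam, Real.log_zero]
    simp
  · -- main case lam > 0
    have ha : 0 < (∑ k, rv k) / rv j0 :=
      div_pos (Finset.sum_pos (fun k _ => hrv k) hne) (hrv j0)
    have hb : 0 < (∑ j, l j) / l k0 :=
      div_pos (Finset.sum_pos (fun k _ => hl k) hne) (hl k0)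
    have hSl : ∀ n, lam ^ n * ((∑ k, rv k) / rv j0) ≤ S n := by
      intro n; rw [← mul_div_assoc, div_le_iff₀ (hrv j0)]; exact hlower n
    have hSu : ∀ n, S n ≤ lam ^ n * ((∑ j, l j) / l k0) := by
      intro n; rw [← mul_div_assoc, le_div_iff₀ (hl k0)]; exact hupper n
    refine ⟨|Real.log ((∑ k, rv k) / rv j0)| + |Real.log ((∑ j, l j) / l k0)|, fun n => ?_⟩
    have hcn : c (n + 1) = Real.log (S n) := by
      rw [hc (n + 1) (by omega)]; norm_num [hS]
    have hpos : 0 < lam ^ n * ((∑ k, rv k) / rv j0) :=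
      mul_pos (pow_pos hlam n) ha
    have h1 : (n : ℝ) * Real.log lam + Real.log ((∑ k, rv k) / rv j0)
        ≤ Real.log (S n) := by
      have := Real.log_le_log hpos (hSl n)
      rwa [Real.log_mul (pow_ne_zero _ hlam.ne') ha.ne', Real.log_pow] at this
    have h2 : Real.log (S n)
        ≤ (n : ℝ) * Real.log lam + Real.log ((∑ j, l j) / l k0) := by
      have := Real.log_le_log (hpos.trans_le (hSl n)) (hSu n)
      rwa [Real.log_mul (pow_ne_zero _ hlam.ne') hb.ne', Real.log_pow] at this
    rw [hcn]
    have e1 := neg_abs_le (Real.log ((∑ k, rv k) / rv j0))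
    have e2 := le_abs_self (Real.log ((∑ j, l j) / l k0))
    have e3 := abs_nonneg (Real.log ((∑ k, rv k) / rv j0))
    have e4 := abs_nonneg (Real.log ((∑ j, l j) / l k0))
    rw [abs_le]
    constructor <;> linarith

/-- Surface entropy asymptotics of a 2-MIS on `ℕ²` with `Ω` a mixing SFT with primitive
transition matrix `A`: for `x_n = p₁^{k₁n}`, `y_n = p₂^{k₂n}` with `k₁ ≥ k₂ ≥ 1`, the
normalized error of the pattern count converges to `-(1 - 1/(p₁p₂)) log λ_A`. -/
theorem stmt12 (m : ℕ) (hm : 1 ≤ m) (A : Matrix (Fin m) (Fin m) ℝ)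
    (hA0 : ∀ i j, 0 ≤ A i j) (hAint : ∀ i j, ∃ z : ℕ, A i j = (z : ℝ))
    (hprim : ∃ N : ℕ, ∀ i j, 0 < (A ^ N) i j)
    (lam : ℝ) (l rv : Fin m → ℝ) (hl : ∀ i, 0 < l i) (hrv : ∀ i, 0 < rv i)
    (hleft : Matrix.vecMul l A = lam • l) (hright : A.mulVec rv = lam • rv)
    (hnorm : ∑ i, l i * rv i = 1)
    (p1 p2 k1 k2 : ℕ) (hp1 : 2 ≤ p1) (hp2 : 2 ≤ p2) (hk : k2 ≤ k1) (hk2 : 1 ≤ k2)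
    (c : ℕ → ℝ) (hc : ∀ i, 1 ≤ i → c i = Real.log (∑ k, ∑ j, (A ^ (i - 1)) k j))
    (h : ℝ)
    (hh : h = (1 - 1 / ((p1 : ℝ) * p2)) * ((p1 : ℝ) * p2 - 1) *
      ∑' i : ℕ, c (i + 1) / ((p1 : ℝ) * p2) ^ (i + 1)) :
    Filter.Tendsto (fun n : ℕ =>
      ((1 - 1 / ((p1 : ℝ) * p2)) * ((p1 : ℝ) * p2 - 1) *
          (∑ i ∈ Finset.Icc 1 (k2 * n),
            ((p1 : ℝ) ^ (k1 * n) * (p2 : ℝ) ^ (k2 * n) / ((p1 : ℝ) * p2) ^ i) * c i)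
        - (p1 : ℝ) ^ (k1 * n) * (p2 : ℝ) ^ (k2 * n) * h)
      / (((k2 * n : ℕ) : ℝ) * ((p1 : ℝ) ^ (k1 * n) * (p2 : ℝ) ^ (k2 * n))
          / ((p1 : ℝ) * p2) ^ (k2 * n)))
      Filter.atTop (nhds (-(1 - 1 / ((p1 : ℝ) * p2)) * Real.log lam)) := by
  subst hh
  obtain ⟨M, hM⟩ := aux_bound12 m hm A hA0 hprim lam l rv hl hrv hleft hright c hc
  set q : ℝ := (p1 : ℝ) * (p2 : ℝ) with hqdef
  have hq4 : (4 : ℝ) ≤ q := by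
    have h1 : (2 : ℝ) ≤ (p1 : ℝ) := by exact_mod_cast hp1
    have h2 : (2 : ℝ) ≤ (p2 : ℝ) := by exact_mod_cast hp2
    nlinarith
  have hq0 : (0 : ℝ) < q := by linarith
  have hqne : q ≠ 0 := hq0.ne'
  have hq1 : (1 : ℝ) < q := by linarith
  have hqi0 : (0 : ℝ) ≤ 1 / q := by positivity
  have hqi1 : (1 : ℝ) / q < 1 := by
    rw [div_lt_one hq0]; linarith
  set L : ℝ := Real.log lam with hLdef
  set d : ℕ → ℝ := fun i => c (i + 1) - i * L with hd
  have hMd : ∀ i : ℕ, |d i| ≤ M := by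
    intro i; simp only [hd]; exact hM i
  have hM0 : 0 ≤ M := (abs_nonneg _).trans (hMd 0)
  have hcd : ∀ i : ℕ, c (i + 1) = i * L + d i := by
    intro i; simp only [hd]; ring
  set u : ℕ → ℝ := fun i => (1 / q) ^ (i + 1) with hu
  have hu0 : ∀ i, 0 ≤ u i := fun i => by simp only [hu]; positivity
  set g : ℕ → ℝ := fun i => c (i + 1) * u i with hg
  have hgdiv : ∀ i : ℕ, c (i + 1) / q ^ (i + 1) = g i := by
    intro i
    simp only [hg, hu, div_pow, one_pow]
    ring
  -- summability facts
  have hsum_u : Summable u := by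
    refine ((summable_geometric_of_lt_one hqi0 hqi1).mul_right (1 / q)).congr fun i => ?_
    simp only [hu]; rw [pow_succ]
  have hsum_iu : Summable fun i : ℕ => (i : ℝ) * u i := by
    refine ((summable_pow_mul_geometric_of_norm_lt_one 1
      (by rw [Real.norm_eq_abs, abs_of_nonneg hqi0]; exact hqi1)).mul_right (1 / q)).congr
      fun i => ?_
    simp only [hu]; rw [pow_one, pow_succ]; ring
  have hsum_dshift : ∀ r : ℕ, Summable fun i : ℕ => d (i + r) * u i := by
    intro r
    refine Summable.of_norm_bounded (g := fun i => M * u i) (hsum_u.mul_left M) fun i => ?_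
    rw [norm_mul, Real.norm_eq_abs, Real.norm_eq_abs, abs_of_nonneg (hu0 i)]
    exact mul_le_mul_of_nonneg_right (hMd _) (hu0 i)
  have hsum_g : Summable g := by
    refine ((hsum_iu.mul_left L).add (hsum_dshift 0)).congr fun i => ?_
    simp only [hg]
    rw [hcd i]
    ring
  set t1 : ℝ := ∑' i : ℕ, (i : ℝ) * u i with ht1
  set s1 : ℝ := ∑' i : ℕ, u i with hs1def
  set B : ℕ → ℝ := fun r => ∑' i : ℕ, d (i + r) * u i with hB
  have hs1 : s1 = (1 / q) * (1 - 1 / q)⁻¹ := by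
    rw [hs1def]
    calc ∑' i : ℕ, u i = ∑' i : ℕ, (1 / q) ^ i * (1 / q) := by
          refine tsum_congr fun i => ?_
          simp only [hu]; rw [pow_succ]
      _ = (1 - 1 / q)⁻¹ * (1 / q) := by
          rw [tsum_mul_right, tsum_geometric_of_lt_one hqi0 hqi1]
      _ = (1 / q) * (1 - 1 / q)⁻¹ := by ring
  have hs1nn : 0 ≤ s1 := by
    rw [hs1]
    have : (0:ℝ) < 1 - 1/q := by linarith
    positivity
  have hBle : ∀ r : ℕ, |B r| ≤ M * s1 := by
    intro r
    have h1 : ‖B r‖ ≤ ∑' i : ℕ, ‖d (i + r) * u i‖ := by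
      refine norm_tsum_le_tsum_norm ?_
      refine Summable.of_norm_bounded (g := fun i => M * u i) (hsum_u.mul_left M) fun i => ?_
      rw [norm_norm, norm_mul, Real.norm_eq_abs, Real.norm_eq_abs, abs_of_nonneg (hu0 i)]
      exact mul_le_mul_of_nonneg_right (hMd _) (hu0 i)
    have h2 : (∑' i : ℕ, ‖d (i + r) * u i‖) ≤ ∑' i : ℕ, M * u i := by
      refine Summable.tsum_le_tsum (fun i => ?_) ?_ (hsum_u.mul_left M)
      · rw [norm_mul, Real.norm_eq_abs, Real.norm_eq_abs, abs_of_nonneg (hu0 i)]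
        exact mul_le_mul_of_nonneg_right (hMd _) (hu0 i)
      · refine Summable.of_norm_bounded (g := fun i => M * u i) (hsum_u.mul_left M) fun i => ?_
        rw [norm_norm, norm_mul, Real.norm_eq_abs, Real.norm_eq_abs, abs_of_nonneg (hu0 i)]
        exact mul_le_mul_of_nonneg_right (hMd _) (hu0 i)
    rw [tsum_mul_left] at h2
    calc |B r| = ‖B r‖ := (Real.norm_eq_abs _).symm
      _ ≤ ∑' i : ℕ, ‖d (i + r) * u i‖ := h1
      _ ≤ M * s1 := by rw [hs1def]; exact h2
  -- key tail identity
  have hkey : ∀ r : ℕ, (∑' i : ℕ, g (i + r)) * q ^ r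
      = L * t1 + (r : ℝ) * L * s1 + B r := by
    intro r
    rw [← tsum_mul_right]
    have hpt : ∀ i : ℕ, g (i + r) * q ^ r
        = L * ((i : ℝ) * u i) + ((r : ℝ) * L) * u i + d (i + r) * u i := by
      intro i
      have e : (1 / q : ℝ) ^ (i + r + 1) * q ^ r = u i := by
        simp only [hu]
        rw [show i + r + 1 = (i + 1) + r by ring, pow_add, mul_assoc, ← mul_pow,
          one_div, inv_mul_cancel₀ hqne, one_pow, mul_one]
      have e2 : g (i + r) = (((i : ℝ) + (r : ℝ)) * L + d (i + r)) * (1 / q) ^ (i + r + 1) := by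
        simp only [hg, hu]
        rw [hcd (i + r)]
        push_cast
        ring
      rw [e2, mul_assoc, e]
      ring
    calc ∑' i : ℕ, g (i + r) * q ^ r
        = ∑' i : ℕ, (L * ((i : ℝ) * u i) + ((r : ℝ) * L) * u i + d (i + r) * u i) :=
          tsum_congr hpt
      _ = L * t1 + (r : ℝ) * L * s1 + B r := by
          rw [Summable.tsum_add (((hsum_iu.mul_left L).add (hsum_u.mul_left ((r : ℝ) * L))))
            (hsum_dshift r),
            Summable.tsum_add (hsum_iu.mul_left L) (hsum_u.mul_left ((r : ℝ) * L)),
            tsum_mul_left, tsum_mul_left]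
  set CC : ℝ := (1 - 1 / q) * (q - 1) with hCC
  have hEq : ∀ n : ℕ, 1 ≤ n →
      (CC * (∑ i ∈ Finset.Icc 1 (k2 * n),
          ((p1 : ℝ) ^ (k1 * n) * (p2 : ℝ) ^ (k2 * n) / q ^ i) * c i)
        - (p1 : ℝ) ^ (k1 * n) * (p2 : ℝ) ^ (k2 * n)
            * (CC * ∑' i : ℕ, c (i + 1) / q ^ (i + 1)))
      / (((k2 * n : ℕ) : ℝ) * ((p1 : ℝ) ^ (k1 * n) * (p2 : ℝ) ^ (k2 * n)) / q ^ (k2 * n))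
      = -(CC * L * s1) + (-(CC * (L * t1 + B (k2 * n)))) / ((k2 * n : ℕ) : ℝ) := by
    intro n hn
    set r : ℕ := k2 * n with hr
    have hr1 : 1 ≤ r := by
      calc 1 = 1 * 1 := by ring
        _ ≤ k2 * n := Nat.mul_le_mul hk2 hn
    have hrR : (0 : ℝ) < ((r : ℕ) : ℝ) := by exact_mod_cast hr1
    set X : ℝ := (p1 : ℝ) ^ (k1 * n) * (p2 : ℝ) ^ (k2 * n) with hX
    have hX0 : (0 : ℝ) < X := by
      have h1 : (0 : ℝ) < (p1 : ℝ) := by exact_mod_cast Nat.lt_of_lt_of_le Nat.zero_lt_two hp1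
      have h2 : (0 : ℝ) < (p2 : ℝ) := by exact_mod_cast Nat.lt_of_lt_of_le Nat.zero_lt_two hp2
      rw [hX]; positivity
    have hT : (∑' i : ℕ, c (i + 1) / q ^ (i + 1)) = ∑' i, g i := tsum_congr hgdiv
    have eA : (∑ i ∈ Finset.Icc 1 r, (X / q ^ i) * c i)
        = X * ∑ i ∈ Finset.range r, g i := by
      rw [← Finset.Ico_add_one_right_eq_Icc, Finset.sum_Ico_eq_sum_range, Finset.mul_sum]
      refine Finset.sum_congr rfl fun i _ => ?_
      simp only [hg, hu, div_pow, one_pow]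
      rw [add_comm 1 i]
      ring
    rw [eA, hT]
    have hsplit := hsum_g.sum_add_tsum_nat_add r
    have eB : CC * (X * ∑ i ∈ Finset.range r, g i) - X * (CC * ∑' i, g i)
        = -(CC * X * ∑' i : ℕ, g (i + r)) := by
      rw [← hsplit]; ring
    rw [eB]
    have e1 : -(CC * X * ∑' i : ℕ, g (i + r)) / (((r : ℕ) : ℝ) * X / q ^ r)
        = -(CC * ((∑' i : ℕ, g (i + r)) * q ^ r)) / ((r : ℕ) : ℝ) := by
      rw [div_div_eq_mul_div,
        show -(CC * X * ∑' i : ℕ, g (i + r)) * q ^ r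
          = (-(CC * ((∑' i : ℕ, g (i + r)) * q ^ r))) * X by ring,
        mul_div_mul_right _ _ hX0.ne']
    rw [e1, hkey r]
    field_simp
    ring
  have hTend0 : Filter.Tendsto
      (fun n : ℕ => (-(CC * (L * t1 + B (k2 * n)))) / ((k2 * n : ℕ) : ℝ))
      Filter.atTop (nhds 0) := by
    have hK : Filter.Tendsto (fun n : ℕ => ((k2 * n : ℕ) : ℝ)) Filter.atTop Filter.atTop :=
      tendsto_natCast_atTop_atTop.comp
        (Filter.tendsto_atTop_mono (fun n => Nat.le_mul_of_pos_left n (by omega))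
          Filter.tendsto_id)
    refine squeeze_zero_norm'
      (a := fun n : ℕ => (|CC| * (|L * t1| + M * s1)) / ((k2 * n : ℕ) : ℝ)) ?_
      (Filter.Tendsto.div_atTop tendsto_const_nhds hK)
    filter_upwards [Filter.eventually_ge_atTop 1] with n hn
    have hrR : (0 : ℝ) < ((k2 * n : ℕ) : ℝ) := by
      have : 1 ≤ k2 * n := by
        calc 1 = 1 * 1 := by ring
          _ ≤ k2 * n := Nat.mul_le_mul hk2 hn
      exact_mod_cast this
    rw [norm_div, Real.norm_eq_abs, Real.norm_eq_abs, abs_of_pos hrR]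
    have hnum : |(-(CC * (L * t1 + B (k2 * n))))| ≤ |CC| * (|L * t1| + M * s1) := by
      rw [abs_neg, abs_mul]
      refine mul_le_mul_of_nonneg_left ?_ (abs_nonneg _)
      exact (abs_add_le _ _).trans (by linarith [hBle (k2 * n)])
    gcongr
  have hfinal : Filter.Tendsto
      (fun n : ℕ => -(CC * L * s1) + (-(CC * (L * t1 + B (k2 * n)))) / ((k2 * n : ℕ) : ℝ))
      Filter.atTop (nhds (-(CC * L * s1) + 0)) := tendsto_const_nhds.add hTend0
  rw [add_zero] at hfinal
  have hval : -(CC * L * s1) = -(1 - 1 / q) * L := by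
    rw [hs1, hCC]
    have h0 : (0 : ℝ) < 1 - 1 / q := by
      have : 1 / q < 1 := hqi1
      linarith
    have h1 : (1 : ℝ) - 1 / q ≠ 0 := h0.ne'
    have h2 : q - 1 ≠ 0 := by linarith
    have key : (q - 1) * (1 / q * (1 - 1 / q)⁻¹) = 1 := by
      have e0 : (1 : ℝ) - 1 / q = (q - 1) / q := by field_simp
      rw [e0, inv_div]
      field_simp
    calc -((1 - 1 / q) * (q - 1) * L * (1 / q * (1 - 1 / q)⁻¹))
        = -((1 - 1 / q) * L * ((q - 1) * (1 / q * (1 - 1 / q)⁻¹))) := by ring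
      _ = -(1 - 1 / q) * L := by rw [key]; ring
  rw [← hval]
  refine Filter.Tendsto.congr' ?_ hfinal
  filter_upwards [Filter.eventually_ge_atTop 1] with n hn
  exact (hEq n hn).symm
end

section
/- Let $p \geq 2$, $1 \leq k \leq p$, and $x_n = p^n - k$. For the full shift $\Omega$ with $|\Omega_i| = 2^i$, the surface-entropy error of the 2-multiplicative integer system $X^{(p,p)}_\Omega$ on $\mathbb{N}^2$ is linear in $n$: $\log|\mathcal{P}(\mathbb{Z}_{x_n, x_n}, X^{(p,p)}_\Omega)| - x_n^2 h = O(n)$, where $\log|\mathcal{P}(\mathbb{Z}_{x_n,x_n}, X^{(p,p)}_\Omega)| = \sum_{i=1}^{n-1} |\mathcal{K}_{x_n \times x_n; i}| \cdot i \log 2$ and $h = (1 - 1/p^2)^2 \sum_{i=1}^{\infty} \frac{p^2 \cdot i \log 2}{p^{2i}}$. -/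
open Classical in
/-- `K_{N×N;ℓ}`: pairs in `[1,N]²` with some coordinate not divisible by `p` whose geometric
orbit meets `[1,N]²` in exactly `ℓ` points. -/
noncomputable def Kset (p N ℓ : ℕ) : Finset (ℕ × ℕ) :=
  (Finset.Icc 1 N ×ˢ Finset.Icc 1 N).filter (fun q =>
    (¬ p ∣ q.1 ∨ ¬ p ∣ q.2) ∧
    ((Finset.Icc 1 N ×ˢ Finset.Icc 1 N).filter
      (fun z => ∃ m : ℕ, z.1 = q.1 * p ^ m ∧ z.2 = q.2 * p ^ m)).card = ℓ)

open Classical in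
/-- The orbit of `q` intersected with the grid `[1,N]²`. -/
noncomputable def orb (p N : ℕ) (q : ℕ × ℕ) : Finset (ℕ × ℕ) :=
  (Finset.Icc 1 N ×ˢ Finset.Icc 1 N).filter
    (fun z => ∃ m : ℕ, z.1 = q.1 * p ^ m ∧ z.2 = q.2 * p ^ m)

open Classical in
/-- Primitive pairs in the grid. -/
noncomputable def prims (p N : ℕ) : Finset (ℕ × ℕ) :=
  (Finset.Icc 1 N ×ˢ Finset.Icc 1 N).filter (fun q => ¬ p ∣ q.1 ∨ ¬ p ∣ q.2)

lemma Kset_eq (p N ℓ : ℕ) :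
    Kset p N ℓ = (prims p N).filter (fun q => (orb p N q).card = ℓ) := by
  classical
  ext q
  simp only [Kset, Finset.mem_filter]
  simp only [prims, orb, Finset.mem_filter]
  tauto

lemma orb_eq (p N n : ℕ) (hp : 2 ≤ p) (hN : N < p ^ n) (q : ℕ × ℕ)
    (hq1 : 1 ≤ q.1) (hq2 : 1 ≤ q.2) :
    orb p N q = ((Finset.range n).filter
      (fun m => q.1 * p ^ m ≤ N ∧ q.2 * p ^ m ≤ N)).image
      (fun m => (q.1 * p ^ m, q.2 * p ^ m)) := by
  classical
  ext z
  simp only [orb, Finset.mem_filter, Finset.mem_image, Finset.mem_product, Finset.mem_Icc,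
    Finset.mem_range]
  constructor
  · rintro ⟨⟨⟨hz1, hz1N⟩, hz2, hz2N⟩, m, hm1, hm2⟩
    have hple : p ^ m ≤ N := by
      calc p ^ m ≤ q.1 * p ^ m := Nat.le_mul_of_pos_left _ (by omega)
        _ = z.1 := hm1.symm
        _ ≤ N := hz1N
    have hmn : m < n := by
      have : p ^ m < p ^ n := lt_of_le_of_lt hple hN
      exact (Nat.pow_lt_pow_iff_right (by omega)).mp this
    exact ⟨m, ⟨hmn, by omega, by omega⟩, by
      rw [← hm1, ← hm2]⟩
  · rintro ⟨m, ⟨hmn, h1, h2⟩, rfl⟩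
    have hpm : 1 ≤ p ^ m := Nat.one_le_pow _ _ (by omega)
    refine ⟨⟨⟨?_, h1⟩, ?_, h2⟩, m, rfl, rfl⟩
    · exact Nat.one_le_iff_ne_zero.mpr (by positivity)
    · exact Nat.one_le_iff_ne_zero.mpr (by positivity)

lemma orb_card (p N n : ℕ) (hp : 2 ≤ p) (hN : N < p ^ n) (q : ℕ × ℕ)
    (hq1 : 1 ≤ q.1) (hq2 : 1 ≤ q.2) :
    (orb p N q).card = ((Finset.range n).filter
      (fun m => q.1 * p ^ m ≤ N ∧ q.2 * p ^ m ≤ N)).card := by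
  classical
  rw [orb_eq p N n hp hN q hq1 hq2]
  apply Finset.card_image_of_injOn
  intro a _ b _ hab
  have h1 : q.1 * p ^ a = q.1 * p ^ b := congrArg Prod.fst hab
  have h2 : p ^ a = p ^ b := Nat.eq_of_mul_eq_mul_left (by omega) h1
  exact Nat.pow_right_injective hp h2

lemma orb_key (p : ℕ) (hp : 2 ≤ p) (q q' : ℕ × ℕ) (m m' : ℕ) (hmm : m ≤ m')
    (hprim : ¬ p ∣ q.1 ∨ ¬ p ∣ q.2)
    (h1 : q.1 * p ^ m = q'.1 * p ^ m') (h2 : q.2 * p ^ m = q'.2 * p ^ m') : q = q' := by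
  obtain ⟨d, rfl⟩ := Nat.exists_eq_add_of_le hmm
  have hpm : 0 < p ^ m := pow_pos (by omega) m
  rw [pow_add] at h1 h2
  have e1 : q.1 = q'.1 * p ^ d :=
    Nat.eq_of_mul_eq_mul_right hpm (by rw [h1]; ring)
  have e2 : q.2 = q'.2 * p ^ d :=
    Nat.eq_of_mul_eq_mul_right hpm (by rw [h2]; ring)
  rcases Nat.eq_zero_or_pos d with hd | hd
  · subst hd
    simp only [pow_zero, mul_one] at e1 e2
    exact Prod.ext e1 e2
  · exfalso
    have hd1 : p ∣ q.1 := e1 ▸ Dvd.dvd.mul_left (dvd_pow_self p (by omega)) _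
    have hd2 : p ∣ q.2 := e2 ▸ Dvd.dvd.mul_left (dvd_pow_self p (by omega)) _
    tauto

lemma orb_disjoint (p N : ℕ) (hp : 2 ≤ p) {q q' : ℕ × ℕ}
    (hq : ¬ p ∣ q.1 ∨ ¬ p ∣ q.2) (hq' : ¬ p ∣ q'.1 ∨ ¬ p ∣ q'.2) (hne : q ≠ q') :
    Disjoint (orb p N q) (orb p N q') := by
  classical
  rw [Finset.disjoint_left]
  intro z hz hz'
  simp only [orb, Finset.mem_filter] at hz hz'
  obtain ⟨_, m, e1, e2⟩ := hz
  obtain ⟨_, m', f1, f2⟩ := hz'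
  rcases le_total m m' with hmm | hmm
  · exact hne (orb_key p hp q q' m m' hmm hq (e1.symm.trans f1) (e2.symm.trans f2))
  · exact hne (orb_key p hp q' q m' m hmm hq' (f1.symm.trans e1) (f2.symm.trans e2)).symm

lemma exists_prim (p : ℕ) (hp : 2 ≤ p) : ∀ a : ℕ, ∀ b : ℕ, 1 ≤ a → 1 ≤ b →
    ∃ c d m, (¬ p ∣ c ∨ ¬ p ∣ d) ∧ 1 ≤ c ∧ 1 ≤ d ∧ a = c * p ^ m ∧ b = d * p ^ m := by
  intro a
  induction a using Nat.strong_induction_on with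
  | _ a ih =>
    intro b ha hb
    by_cases hdvd : p ∣ a ∧ p ∣ b
    · obtain ⟨⟨a', rfl⟩, ⟨b', rfl⟩⟩ := hdvd
      have ha' : 1 ≤ a' := by
        rcases Nat.eq_zero_or_pos a' with h | h
        · subst h; simp at ha
        · exact h
      have hb' : 1 ≤ b' := by
        rcases Nat.eq_zero_or_pos b' with h | h
        · subst h; simp at hb
        · exact h
      have hlt : a' < p * a' := by
        calc a' = 1 * a' := (one_mul a').symm
          _ < p * a' := by
            apply Nat.mul_lt_mul_of_lt_of_le (by omega) le_rfl (by omega)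
      obtain ⟨c, d, m, h1, h2, h3, h4, h5⟩ := ih a' hlt b' ha' hb'
      exact ⟨c, d, m + 1, h1, h2, h3, by rw [h4, pow_succ]; ring, by rw [h5, pow_succ]; ring⟩
    · rw [not_and_or] at hdvd
      exact ⟨a, b, 0, hdvd, ha, hb, by simp, by simp⟩

lemma cover (p N : ℕ) (hp : 2 ≤ p) :
    (prims p N).biUnion (orb p N) = Finset.Icc 1 N ×ˢ Finset.Icc 1 N := by
  classical
  apply Finset.Subset.antisymm
  · intro z hz
    simp only [Finset.mem_biUnion] at hz
    obtain ⟨q, _, hz⟩ := hz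
    simp only [orb, Finset.mem_filter] at hz
    exact hz.1
  · intro z hz
    have hz' := hz
    simp only [Finset.mem_product, Finset.mem_Icc] at hz'
    obtain ⟨c, d, m, hprim, hc, hd, e1, e2⟩ := exists_prim p hp z.1 z.2 hz'.1.1 hz'.2.1
    refine Finset.mem_biUnion.mpr ⟨(c, d), ?_, ?_⟩
    · simp only [prims, Finset.mem_filter, Finset.mem_product, Finset.mem_Icc]
      have hcz : c ≤ z.1 := by
        rw [e1]; exact Nat.le_mul_of_pos_right c (pow_pos (by omega) m)
      have hdz : d ≤ z.2 := by
        rw [e2]; exact Nat.le_mul_of_pos_right d (pow_pos (by omega) m)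
      exact ⟨⟨⟨hc, le_trans hcz hz'.1.2⟩, hd, le_trans hdz hz'.2.2⟩, hprim⟩
    · simp only [orb, Finset.mem_filter]
      exact ⟨hz, m, e1, e2⟩

lemma mem_prims (p N : ℕ) {q : ℕ × ℕ} (hq : q ∈ prims p N) :
    (1 ≤ q.1 ∧ q.1 ≤ N) ∧ (1 ≤ q.2 ∧ q.2 ≤ N) ∧ (¬ p ∣ q.1 ∨ ¬ p ∣ q.2) := by
  classical
  simp only [prims, Finset.mem_filter, Finset.mem_product, Finset.mem_Icc] at hq
  tauto

lemma orb_card_mem (p N n : ℕ) (hp : 2 ≤ p) (hN : N < p ^ n) {q : ℕ × ℕ}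
    (hq : q ∈ prims p N) : (orb p N q).card ∈ Finset.Icc 1 n := by
  classical
  obtain ⟨⟨hq1, hq1N⟩, ⟨hq2, hq2N⟩, _⟩ := mem_prims p N hq
  rw [Finset.mem_Icc]
  constructor
  · apply Finset.card_pos.mpr
    refine ⟨q, ?_⟩
    simp only [orb, Finset.mem_filter, Finset.mem_product, Finset.mem_Icc]
    exact ⟨⟨⟨hq1, hq1N⟩, hq2, hq2N⟩, 0, by simp, by simp⟩
  · rw [orb_card p N n hp hN q hq1 hq2]
    calc ((Finset.range n).filter _).card ≤ (Finset.range n).card :=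
          Finset.card_filter_le _ _
      _ = n := Finset.card_range n

/-- The key counting identity: the orbits of primitive pairs partition the grid. -/
lemma count_eq (p N n : ℕ) (hp : 2 ≤ p) (hN : N < p ^ n) :
    ∑ ℓ ∈ Finset.Icc 1 n, (Kset p N ℓ).card * ℓ = N * N := by
  classical
  have hgrid : (Finset.Icc 1 N ×ˢ Finset.Icc 1 N).card = N * N := by
    simp [Nat.card_Icc]
  have hbi : ((prims p N).biUnion (orb p N)).card = ∑ q ∈ prims p N, (orb p N q).card := by
    apply Finset.card_biUnion
    intro q hq q' hq' hne
    exact orb_disjoint p N hp (mem_prims p N hq).2.2 (mem_prims p N hq').2.2 hne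
  have hfib : ∑ ℓ ∈ Finset.Icc 1 n,
      ∑ q ∈ (prims p N).filter (fun q => (orb p N q).card = ℓ), (orb p N q).card
      = ∑ q ∈ prims p N, (orb p N q).card :=
    Finset.sum_fiberwise_of_maps_to (fun q hq => orb_card_mem p N n hp hN hq) _
  have hinner : ∀ ℓ ∈ Finset.Icc 1 n,
      ∑ q ∈ (prims p N).filter (fun q => (orb p N q).card = ℓ), (orb p N q).card
      = (Kset p N ℓ).card * ℓ := by
    intro ℓ _
    rw [Kset_eq]
    rw [Finset.sum_congr rfl (fun q hq => (Finset.mem_filter.mp hq).2)]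
    simp [mul_comm]
  calc ∑ ℓ ∈ Finset.Icc 1 n, (Kset p N ℓ).card * ℓ
      = ∑ ℓ ∈ Finset.Icc 1 n,
        ∑ q ∈ (prims p N).filter (fun q => (orb p N q).card = ℓ), (orb p N q).card :=
        (Finset.sum_congr rfl hinner).symm
    _ = ∑ q ∈ prims p N, (orb p N q).card := hfib
    _ = ((prims p N).biUnion (orb p N)).card := hbi.symm
    _ = N * N := by rw [cover p N hp, hgrid]

lemma Kn_bound (p N n : ℕ) (hp : 2 ≤ p) (hn : 1 ≤ n) (hN : N < p ^ n) :
    (Kset p N n).card ≤ p * p := by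
  classical
  have hsub : Kset p N n ⊆ Finset.Icc 1 p ×ˢ Finset.Icc 1 p := by
    intro q hq
    rw [Kset_eq, Finset.mem_filter] at hq
    obtain ⟨hqP, hcard⟩ := hq
    obtain ⟨⟨hq1, hq1N⟩, ⟨hq2, hq2N⟩, _⟩ := mem_prims p N hqP
    rw [orb_card p N n hp hN q hq1 hq2] at hcard
    have hMeq : (Finset.range n).filter (fun m => q.1 * p ^ m ≤ N ∧ q.2 * p ^ m ≤ N)
        = Finset.range n :=
      Finset.eq_of_subset_of_card_le (Finset.filter_subset _ _)
        (by rw [hcard, Finset.card_range])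
    have hmem : n - 1 ∈ (Finset.range n).filter
        (fun m => q.1 * p ^ m ≤ N ∧ q.2 * p ^ m ≤ N) := by
      rw [hMeq, Finset.mem_range]; omega
    rw [Finset.mem_filter] at hmem
    obtain ⟨_, hb1, hb2⟩ := hmem
    have hpn : p ^ n = p ^ (n - 1) * p := by
      rw [← pow_succ]; congr 1; omega
    have hlt1 : q.1 * p ^ (n - 1) < p * p ^ (n - 1) := by
      calc q.1 * p ^ (n - 1) ≤ N := hb1
        _ < p ^ n := hN
        _ = p * p ^ (n - 1) := by rw [hpn]; ring
    have hlt2 : q.2 * p ^ (n - 1) < p * p ^ (n - 1) := by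
      calc q.2 * p ^ (n - 1) ≤ N := hb2
        _ < p ^ n := hN
        _ = p * p ^ (n - 1) := by rw [hpn]; ring
    have h1 : q.1 < p := Nat.lt_of_mul_lt_mul_right hlt1
    have h2 : q.2 < p := Nat.lt_of_mul_lt_mul_right hlt2
    simp only [Finset.mem_product, Finset.mem_Icc]
    exact ⟨⟨hq1, by omega⟩, hq2, by omega⟩
  calc (Kset p N n).card ≤ (Finset.Icc 1 p ×ˢ Finset.Icc 1 p).card :=
        Finset.card_le_card hsub
    _ = p * p := by simp [Nat.card_Icc]

/-- For the full shift (`|Ω_i| = 2^i`) and `x_n = pⁿ - k`, the surface-entropy error is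
linear in `n`: `log|𝒫(ℤ_{x_n,x_n})| - x_n² h = O(n)`. -/
theorem stmt15 (p k : ℕ) (hp : 2 ≤ p) (hk1 : 1 ≤ k) (hkp : k ≤ p)
    (h : ℝ)
    (hh : h = (1 - 1 / (p : ℝ) ^ 2) ^ 2 *
      ∑' i : ℕ, ((p : ℝ) ^ 2 * ((i : ℝ) + 1) * Real.log 2) / (p : ℝ) ^ (2 * (i + 1))) :
    ∃ C : ℝ, 0 < C ∧ ∀ n : ℕ, 1 ≤ n →
      |(∑ i ∈ Finset.Icc 1 (n - 1), ((Kset p (p ^ n - k) i).card : ℝ) * (i : ℝ) * Real.log 2)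
        - ((p ^ n - k : ℕ) : ℝ) ^ 2 * h| ≤ C * n := by
  have hpR : (2 : ℝ) ≤ (p : ℝ) := by exact_mod_cast hp
  have hp2pos : (0 : ℝ) < (p : ℝ) ^ 2 := by positivity
  have hp2big : (4 : ℝ) ≤ (p : ℝ) ^ 2 := by nlinarith
  -- First: h = log 2
  set r : ℝ := ((p : ℝ) ^ 2)⁻¹ with hrdef
  have hr01 : 0 < r ∧ r < 1 := by
    constructor
    · positivity
    · rw [hrdef, inv_lt_one_iff₀]; right; linarith
  have hrnorm : ‖r‖ < 1 := by
    rw [Real.norm_eq_abs, abs_of_pos hr01.1]; exact hr01.2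
  have hgeom : ∑' i : ℕ, ((i : ℝ) + 1) * r ^ i = 1 / (1 - r) ^ 2 := by
    have := tsum_choose_mul_geometric_of_norm_lt_one (𝕜 := ℝ) 1 hrnorm
    simp only [Nat.choose_one_right] at this
    convert this using 2 with i
    · rfl
    funext i
    push_cast
    ring
  have hterm : ∀ i : ℕ, ((p : ℝ) ^ 2 * ((i : ℝ) + 1) * Real.log 2) / (p : ℝ) ^ (2 * (i + 1))
      = Real.log 2 * (((i : ℝ) + 1) * r ^ i) := by
    intro i
    rw [pow_mul, hrdef, inv_pow]
    rw [pow_succ]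
    have hne : ((p : ℝ) ^ 2) ^ i ≠ 0 := by positivity
    field_simp
    ring
  have hlogh : h = Real.log 2 := by
    rw [hh, tsum_congr hterm, tsum_mul_left, hgeom]
    have h1r : (1 : ℝ) - r ≠ 0 := by
      have := hr01.2; intro hc; linarith [sub_eq_zero.mp hc]
    have : 1 - 1 / (p : ℝ) ^ 2 = 1 - r := by rw [hrdef, one_div]
    rw [this]
    field_simp
  have hlog2pos : 0 < Real.log 2 := Real.log_pos one_lt_two
  refine ⟨(p : ℝ) * (p : ℝ) * Real.log 2, by positivity, ?_⟩
  intro n hn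
  set N : ℕ := p ^ n - k with hNdef
  have hpn : 0 < p ^ n := pow_pos (by omega) n
  have hN : N < p ^ n := by rw [hNdef]; omega
  have hcount := count_eq p N n hp hN
  -- split the sum
  obtain ⟨m, rfl⟩ : ∃ m, n = m + 1 := ⟨n - 1, by omega⟩
  have hsplit : ∑ ℓ ∈ Finset.Icc 1 (m + 1), (Kset p N ℓ).card * ℓ
      = (∑ ℓ ∈ Finset.Icc 1 m, (Kset p N ℓ).card * ℓ) + (Kset p N (m + 1)).card * (m + 1) :=
    Finset.sum_Icc_succ_top (by omega) _
  set A : ℕ := ∑ ℓ ∈ Finset.Icc 1 m, (Kset p N ℓ).card * ℓ with hAdef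
  set B : ℕ := (Kset p N (m + 1)).card * (m + 1) with hBdef
  have hAB : A + B = N * N := by rw [hAdef, hBdef, ← hsplit]; exact hcount
  have hBle : B ≤ (p * p) * (m + 1) := by
    rw [hBdef]
    exact Nat.mul_le_mul_right _ (Kn_bound p N (m + 1) hp (by omega) hN)
  -- the real sum
  have hsum : ∑ i ∈ Finset.Icc 1 (m + 1 - 1), ((Kset p N i).card : ℝ) * (i : ℝ) * Real.log 2
      = (A : ℝ) * Real.log 2 := by
    have : m + 1 - 1 = m := by omega
    rw [this, hAdef]
    push_cast
    rw [← Finset.sum_mul]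
  rw [hsum, hlogh]
  have hcastAB : (A : ℝ) + (B : ℝ) = (N : ℝ) * (N : ℝ) := by exact_mod_cast hAB
  have hNsq : ((N : ℕ) : ℝ) ^ 2 = (N : ℝ) * (N : ℝ) := sq (N : ℝ)
  have : (A : ℝ) * Real.log 2 - ((N : ℕ) : ℝ) ^ 2 * Real.log 2 = -((B : ℝ) * Real.log 2) := by
    rw [hNsq]
    nlinarith [hcastAB]
  rw [this, abs_neg, abs_of_nonneg (by positivity)]
  have hBcast : (B : ℝ) ≤ ((p : ℝ) * (p : ℝ)) * ((m : ℝ) + 1) := by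
    have : ((p * p) * (m + 1) : ℕ) = ((p : ℝ) * (p : ℝ)) * ((m : ℝ) + 1) := by push_cast; ring
    calc (B : ℝ) ≤ (((p * p) * (m + 1) : ℕ) : ℝ) := by exact_mod_cast hBle
      _ = ((p : ℝ) * (p : ℝ)) * ((m : ℝ) + 1) := this
  calc (B : ℝ) * Real.log 2 ≤ ((p : ℝ) * (p : ℝ)) * ((m : ℝ) + 1) * Real.log 2 := by
        apply mul_le_mul_of_nonneg_right hBcast (le_of_lt hlog2pos)
    _ = (p : ℝ) * (p : ℝ) * Real.log 2 * ((m + 1 : ℕ) : ℝ) := by push_cast; ring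
end

section
/- Let $A$ be a primitive nonnegative integer matrix with spectral radius $\lambda_A$, and let $\Sigma_A$ be the associated one-dimensional SFT, so that the number of admissible words of length $n$ is $\|A^{n-1}\|_1$ (sum of all entries of $A^{n-1}$). Then $\log\|A^{n-1}\|_1 - n \log\lambda_A$ converges as $n \to \infty$ to $\log\left(\frac{\sum_k r_k \sum_j l_j}{\lambda_A}\right)$, where $l, r$ are left and right Perron eigenvectors of $A$ normalized so that $l \cdot r = 1$. -/
open Filter Finset

private lemma aux_sum_le_sup {ι : Type*} (s : Finset ι) (hne : s.Nonempty) (p x : ι → ℝ)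
    (hp : ∀ k ∈ s, 0 ≤ p k) :
    (∑ k ∈ s, p k * x k) ≤ (∑ k ∈ s, p k) * s.sup' hne x := by
  rw [Finset.sum_mul]
  exact Finset.sum_le_sum fun k hk =>
    mul_le_mul_of_nonneg_left (Finset.le_sup' x hk) (hp k hk)

private lemma aux_inf_le_sum {ι : Type*} (s : Finset ι) (hne : s.Nonempty) (p x : ι → ℝ)
    (hp : ∀ k ∈ s, 0 ≤ p k) :
    (∑ k ∈ s, p k) * s.inf' hne x ≤ ∑ k ∈ s, p k * x k := by
  rw [Finset.sum_mul]
  exact Finset.sum_le_sum fun k hk =>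
    mul_le_mul_of_nonneg_left (Finset.inf'_le x hk) (hp k hk)

private lemma aux_tendsto_zero (u : ℕ → ℝ) (hanti : ∀ n, u (n + 1) ≤ u n)
    (hnn : ∀ n, 0 ≤ u n) (θ : ℝ) (hθ : θ < 1) (N : ℕ)
    (hc : ∀ n, u (n + N) ≤ θ * u n) : Tendsto u atTop (nhds 0) := by
  have hA : Antitone u := antitone_nat_of_succ_le hanti
  have hbdd : BddBelow (Set.range u) := ⟨0, by rintro x ⟨n, rfl⟩; exact hnn n⟩
  have hL : Tendsto u atTop (nhds (⨅ n, u n)) := tendsto_atTop_ciInf hA hbdd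
  set L := ⨅ n, u n with hLdef
  have hL0 : 0 ≤ L := le_ciInf hnn
  have h1 : Tendsto (fun n => u (n + N)) atTop (nhds L) := hL.comp (tendsto_add_atTop_nat N)
  have h2 : Tendsto (fun n => θ * u n) atTop (nhds (θ * L)) := hL.const_mul θ
  have h3 : L ≤ θ * L := le_of_tendsto_of_tendsto' h1 h2 hc
  have hLz : L = 0 := by nlinarith
  rwa [hLz] at hL

/-- Surface entropy formula for 1-dimensional mixing SFTs: for a primitive nonnegative
integer matrix `A` with Perron data `(λ, l, r)`, `log‖A^{n-1}‖₁ - n log λ` converges to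
`log((Σ_k r_k)(Σ_j l_j)/λ)`. -/
theorem stmt18 (m : ℕ) (hm : 1 ≤ m) (A : Matrix (Fin m) (Fin m) ℝ)
    (hA0 : ∀ i j, 0 ≤ A i j) (hAint : ∀ i j, ∃ z : ℕ, A i j = (z : ℝ))
    (hprim : ∃ N : ℕ, ∀ i j, 0 < (A ^ N) i j)
    (lam : ℝ) (l rv : Fin m → ℝ) (hl : ∀ i, 0 < l i) (hrv : ∀ i, 0 < rv i)
    (hleft : Matrix.vecMul l A = lam • l) (hright : A.mulVec rv = lam • rv)
    (hnorm : ∑ i, l i * rv i = 1) :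
    Filter.Tendsto (fun n : ℕ =>
      Real.log (∑ i, ∑ j, (A ^ (n - 1)) i j) - (n : ℝ) * Real.log lam)
      Filter.atTop (nhds (Real.log ((∑ i, rv i) * (∑ j, l j) / lam))) := by
  have hm0 : 0 < m := hm
  have i0 : Fin m := ⟨0, hm0⟩
  have hne : (Finset.univ : Finset (Fin m)).Nonempty := ⟨i0, mem_univ i0⟩
  -- entries of powers are nonneg
  have hpow0 : ∀ n i j, 0 ≤ (A ^ n) i j := by
    intro n
    induction n with
    | zero => intro i j; by_cases h : i = j <;> simp [Matrix.one_apply, h]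
    | succ n ih =>
      intro i j
      rw [pow_succ, Matrix.mul_apply]
      exact Finset.sum_nonneg fun k _ => mul_nonneg (ih i k) (hA0 k j)
  -- right eigen iterates, entrywise
  have hR : ∀ n : ℕ, (A ^ n).mulVec rv = (lam ^ n) • rv := by
    intro n
    induction n with
    | zero => simp
    | succ n ih =>
      rw [pow_succ', ← Matrix.mulVec_mulVec, ih, Matrix.mulVec_smul, hright,
        smul_smul, pow_succ', mul_comm]
  -- left eigen iterates
  have hL : ∀ n : ℕ, Matrix.vecMul l (A ^ n) = (lam ^ n) • l := by
    intro n
    induction n with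
    | zero => simp
    | succ n ih =>
      rw [pow_succ, ← Matrix.vecMul_vecMul, ih]
      rw [show Matrix.vecMul (lam ^ n • l) A = lam ^ n • Matrix.vecMul l A from
        Matrix.smul_vecMul (lam ^ n) l A, hleft, smul_smul, pow_succ, mul_comm]
  have hRent : ∀ (n : ℕ) (i : Fin m), ∑ j, (A ^ n) i j * rv j = lam ^ n * rv i := by
    intro n i
    have := congrFun (hR n) i
    simpa [Matrix.mulVec, dotProduct] using this
  have hLent : ∀ (n : ℕ) (j : Fin m), ∑ i, l i * (A ^ n) i j = lam ^ n * l j := by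
    intro n j
    have := congrFun (hL n) j
    simpa [Matrix.vecMul, dotProduct] using this
  have hlam0 : 0 ≤ lam := by
    have h1 : ∑ j, A i0 j * rv j = lam * rv i0 := by simpa using hRent 1 i0
    have h2 : 0 ≤ ∑ j, A i0 j * rv j :=
      Finset.sum_nonneg fun j _ => mul_nonneg (hA0 i0 j) (hrv j).le
    nlinarith [hrv i0]
  rcases eq_or_lt_of_le hlam0 with hlamz | hlam
  · -- degenerate case lam = 0 : A = 0
    have hAz : A = 0 := by
      ext i j
      have h1 : ∑ k, A i k * rv k = 0 := by
        have := hRent 1 i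
        simp only [pow_one] at this
        rw [this, ← hlamz, zero_mul]
      have h2 := (Finset.sum_eq_zero_iff_of_nonneg
        (fun k _ => mul_nonneg (hA0 i k) (hrv k).le)).mp h1 j (mem_univ j)
      have := (hrv j).ne'
      simp only [Matrix.zero_apply]
      rcases mul_eq_zero.mp h2 with h | h
      · exact h
      · exact absurd h this
    have hev : ∀ᶠ n : ℕ in atTop, (Real.log (∑ i, ∑ j, (A ^ (n - 1)) i j)
        - (n : ℝ) * Real.log lam) = 0 := by
      filter_upwards [eventually_ge_atTop 2] with n hn
      have hn1 : n - 1 ≠ 0 := by omega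
      rw [hAz, zero_pow hn1, ← hlamz]
      simp
    refine Tendsto.congr' (hev.mono fun n h => h.symm) ?_
    rw [← hlamz, div_zero, Real.log_zero]
    exact tendsto_const_nhds
  · -- main case lam > 0
    obtain ⟨N, hN⟩ := hprim
    have hlamn : ∀ n : ℕ, (0:ℝ) < lam ^ n := fun n => pow_pos hlam n
    set b : ℕ → Fin m → Fin m → ℝ :=
      fun n i j => (A ^ n) i j / (lam ^ n * rv i * l j) with hb
    set Ps : ℕ → Fin m → Fin m → ℝ :=
      fun s i k => (A ^ s) i k * rv k / (lam ^ s * rv i) with hPs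
    have hPsnn : ∀ s i k, 0 ≤ Ps s i k := fun s i k =>
      div_nonneg (mul_nonneg (hpow0 s i k) (hrv k).le)
        (mul_nonneg (hlamn s).le (hrv i).le)
    have hPssum : ∀ s i, ∑ k, Ps s i k = 1 := by
      intro s i
      simp only [hPs]
      rw [← Finset.sum_div, hRent s i, div_self (mul_pos (hlamn s) (hrv i)).ne']
    have hrec : ∀ s n i j, b (s + n) i j = ∑ k, Ps s i k * b n k j := by
      intro s n i j
      simp only [hb, hPs]
      rw [pow_add, Matrix.mul_apply, Finset.sum_div]
      refine Finset.sum_congr rfl fun k _ => ?_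
      have h1 : rv k ≠ 0 := (hrv k).ne'
      have h2 : rv i ≠ 0 := (hrv i).ne'
      have h3 : l j ≠ 0 := (hl j).ne'
      have h4 : lam ^ s ≠ 0 := (hlamn s).ne'
      have h5 : lam ^ n ≠ 0 := (hlamn n).ne'
      field_simp
      ring
    have hmean : ∀ n j, ∑ i, (l i * rv i) * b n i j = 1 := by
      intro n j
      have h1 : ∀ i : Fin m, (l i * rv i) * b n i j
          = (l i * (A ^ n) i j) * (lam ^ n * l j)⁻¹ := by
        intro i
        simp only [hb]
        have h2 : rv i ≠ 0 := (hrv i).ne'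
        have h3 : l j ≠ 0 := (hl j).ne'
        have h4 : lam ^ n ≠ 0 := (hlamn n).ne'
        field_simp
      rw [Finset.sum_congr rfl (fun i _ => h1 i), ← Finset.sum_mul, hLent n j,
        mul_inv_cancel₀ (mul_pos (hlamn n) (hl j)).ne']
    set Mx : ℕ → Fin m → ℝ := fun n j => univ.sup' hne fun i => b n i j with hMx
    set mn : ℕ → Fin m → ℝ := fun n j => univ.inf' hne fun i => b n i j with hmn
    have hble : ∀ n i j, b n i j ≤ Mx n j := fun n i j =>
      Finset.le_sup' (f := fun i => b n i j) (mem_univ i)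
    have hbge : ∀ n i j, mn n j ≤ b n i j := fun n i j =>
      Finset.inf'_le (f := fun i => b n i j) (mem_univ i)
    have hMxanti : ∀ s n j, Mx (s + n) j ≤ Mx n j := by
      intro s n j
      refine Finset.sup'_le hne _ fun i _ => ?_
      rw [hrec s n i j]
      calc ∑ k, Ps s i k * b n k j ≤ (∑ k, Ps s i k) * Mx n j :=
            aux_sum_le_sup univ hne _ _ (fun k _ => hPsnn s i k)
        _ = Mx n j := by rw [hPssum s i, one_mul]
    have hmnmono : ∀ s n j, mn n j ≤ mn (s + n) j := by
      intro s n j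
      refine Finset.le_inf' hne _ fun i _ => ?_
      rw [hrec s n i j]
      calc mn n j = (∑ k, Ps s i k) * mn n j := by rw [hPssum s i, one_mul]
        _ ≤ ∑ k, Ps s i k * b n k j :=
            aux_inf_le_sum univ hne _ _ (fun k _ => hPsnn s i k)
    set δ : ℝ := univ.inf' hne fun i => univ.inf' hne fun k => Ps N i k with hδ
    have hδpos : 0 < δ := by
      rw [hδ, Finset.lt_inf'_iff]
      intro i _
      rw [Finset.lt_inf'_iff]
      intro k _
      exact div_pos (mul_pos (hN i k) (hrv k)) (mul_pos (hlamn N) (hrv i))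
    have hδle : ∀ i k, δ ≤ Ps N i k := fun i k =>
      le_trans (Finset.inf'_le _ (mem_univ i)) (Finset.inf'_le _ (mem_univ k))
    set θ : ℝ := 1 - m * δ with hθdef
    have hsumsub : ∀ i, ∑ k : Fin m, (Ps N i k - δ) = θ := by
      intro i
      rw [Finset.sum_sub_distrib, hPssum, Finset.sum_const, card_univ, Fintype.card_fin]
      simp [hθdef]
    have hθ0 : 0 ≤ θ := by
      rw [← hsumsub i0]
      exact Finset.sum_nonneg fun k _ => sub_nonneg.mpr (hδle i0 k)
    have hθ1 : θ < 1 := by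
      have hmδ : (0:ℝ) < m * δ :=
        mul_pos (by exact_mod_cast hm0) hδpos
      rw [hθdef]
      linarith
    have hdob : ∀ n j i i', b (N + n) i j - b (N + n) i' j ≤ θ * (Mx n j - mn n j) := by
      intro n j i i'
      have key : ∀ i'' : Fin m, ∑ k, Ps N i'' k * b n k j
          = (∑ k, (Ps N i'' k - δ) * b n k j) + δ * ∑ k, b n k j := by
        intro i''
        rw [Finset.mul_sum, ← Finset.sum_add_distrib]
        exact Finset.sum_congr rfl fun k _ => by ring
      rw [hrec N n i j, hrec N n i' j, key i, key i']
      have h1 : ∑ k, (Ps N i k - δ) * b n k j ≤ θ * Mx n j := by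
        have h := aux_sum_le_sup univ hne (fun k => Ps N i k - δ) (fun k => b n k j)
          (fun k _ => sub_nonneg.mpr (hδle i k))
        rwa [hsumsub i] at h
      have h2 : θ * mn n j ≤ ∑ k, (Ps N i' k - δ) * b n k j := by
        have h := aux_inf_le_sum univ hne (fun k => Ps N i' k - δ) (fun k => b n k j)
          (fun k _ => sub_nonneg.mpr (hδle i' k))
        rwa [hsumsub i'] at h
      nlinarith [h1, h2]
    have hosc : ∀ j, Tendsto (fun n => Mx n j - mn n j) atTop (nhds 0) := by
      intro j
      refine aux_tendsto_zero _ ?_ ?_ θ hθ1 N ?_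
      · intro n
        have h1 := hMxanti 1 n j
        have h2 := hmnmono 1 n j
        have e : n + 1 = 1 + n := by omega
        rw [e]
        linarith
      · intro n
        have h := le_trans (hbge n i0 j) (hble n i0 j)
        linarith
      · intro n
        have e : n + N = N + n := by omega
        rw [e]
        obtain ⟨imax, _, hmax⟩ := Finset.exists_mem_eq_sup' hne fun i => b (N + n) i j
        obtain ⟨imin, _, hmin⟩ := Finset.exists_mem_eq_inf' hne fun i => b (N + n) i j
        have hd := hdob n j imax imin
        have eMx : Mx (N + n) j = b (N + n) imax j := hmax
        have emn : mn (N + n) j = b (N + n) imin j := hmin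
        rw [eMx, emn]
        exact hd
    have hbnd : ∀ n j, mn n j ≤ 1 ∧ 1 ≤ Mx n j := by
      intro n j
      constructor
      · have h := aux_inf_le_sum univ hne (fun i => l i * rv i) (fun i => b n i j)
          (fun i _ => mul_nonneg (hl i).le (hrv i).le)
        rwa [hmean n j, hnorm, one_mul] at h
      · have h := aux_sum_le_sup univ hne (fun i => l i * rv i) (fun i => b n i j)
          (fun i _ => mul_nonneg (hl i).le (hrv i).le)
        rwa [hmean n j, hnorm, one_mul] at h
    have hb1 : ∀ i j, Tendsto (fun n => b n i j) atTop (nhds 1) := by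
      intro i j
      have h0 : Tendsto (fun n => b n i j - 1) atTop (nhds 0) := by
        refine squeeze_zero_norm (a := fun n => Mx n j - mn n j) ?_ (hosc j)
        intro n
        obtain ⟨h3, h4⟩ := hbnd n j
        have h1 := hble n i j
        have h2 := hbge n i j
        rw [Real.norm_eq_abs, abs_le]
        constructor <;> · linarith
      have h5 := h0.add (tendsto_const_nhds (x := (1:ℝ)))
      simpa using h5
    have hS : Tendsto (fun n => ∑ i, ∑ j, (A ^ n) i j / lam ^ n) atTop
        (nhds ((∑ i, rv i) * (∑ j, l j))) := by
      have hterm : ∀ i j : Fin m,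
          Tendsto (fun n => (A ^ n) i j / lam ^ n) atTop (nhds (rv i * l j)) := by
        intro i j
        have heq : ∀ n, (A ^ n) i j / lam ^ n = b n i j * (rv i * l j) := by
          intro n
          simp only [hb]
          have h2 : rv i ≠ 0 := (hrv i).ne'
          have h3 : l j ≠ 0 := (hl j).ne'
          have h4 : lam ^ n ≠ 0 := (hlamn n).ne'
          field_simp
        have h := (hb1 i j).mul_const (rv i * l j)
        rw [one_mul] at h
        exact h.congr (fun n => (heq n).symm)
      have h := tendsto_finset_sum (univ : Finset (Fin m))
        (fun i _ => tendsto_finset_sum (univ : Finset (Fin m)) (fun j _ => hterm i j))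
      have e : ∑ i : Fin m, ∑ j : Fin m, rv i * l j = (∑ i, rv i) * (∑ j, l j) := by
        rw [Finset.sum_mul_sum]
      rwa [e] at h
    have hSpos : ∀ n, 0 < ∑ i, ∑ j, (A ^ n) i j := by
      intro n
      by_contra hcon
      push_neg at hcon
      have hz : ∑ i, ∑ j, (A ^ n) i j = 0 :=
        le_antisymm hcon (Finset.sum_nonneg fun i _ =>
          Finset.sum_nonneg fun j _ => hpow0 n i j)
      have hall := (Finset.sum_eq_zero_iff_of_nonneg (fun i _ =>
        Finset.sum_nonneg fun j _ => hpow0 n i j)).mp hz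
      have hall2 := (Finset.sum_eq_zero_iff_of_nonneg (fun j _ =>
        hpow0 n i0 j)).mp (hall i0 (mem_univ i0))
      have hre := hRent n i0
      have h2 : ∑ j, (A ^ n) i0 j * rv j = 0 :=
        Finset.sum_eq_zero fun j _ => by rw [hall2 j (mem_univ j), zero_mul]
      nlinarith [hlamn n, hrv i0]
    set T := (∑ i, rv i) * (∑ j, l j) with hT
    have hTpos : 0 < T :=
      mul_pos (Finset.sum_pos (fun i _ => hrv i) hne)
        (Finset.sum_pos (fun j _ => hl j) hne)
    have hlog : Tendsto (fun n : ℕ => Real.log (∑ i, ∑ j, (A ^ n) i j / lam ^ n))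
        atTop (nhds (Real.log T)) :=
      (Real.continuousAt_log hTpos.ne').tendsto.comp hS
    have hcomp : Tendsto
        (fun n : ℕ => Real.log (∑ i, ∑ j, (A ^ (n - 1)) i j / lam ^ (n - 1)))
        atTop (nhds (Real.log T)) := hlog.comp (tendsto_sub_atTop_nat 1)
    have hfin : Tendsto
        (fun n : ℕ => Real.log (∑ i, ∑ j, (A ^ (n - 1)) i j / lam ^ (n - 1)) - Real.log lam)
        atTop (nhds (Real.log T - Real.log lam)) := hcomp.sub_const _
    rw [show Real.log ((∑ i, rv i) * (∑ j, l j) / lam) = Real.log T - Real.log lam from by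
      rw [← hT, Real.log_div hTpos.ne' hlam.ne']]
    refine Tendsto.congr' ?_ hfin
    filter_upwards [eventually_ge_atTop 1] with n hn
    have hSp := hSpos (n - 1)
    have e1 : ∑ i, ∑ j, (A ^ (n - 1)) i j / lam ^ (n - 1)
        = (∑ i, ∑ j, (A ^ (n - 1)) i j) / lam ^ (n - 1) := by
      simp [Finset.sum_div]
    have e2 : ((n - 1 : ℕ) : ℝ) = (n : ℝ) - 1 := by
      have := Nat.cast_sub hn (R := ℝ)
      simpa using this
    rw [e1, Real.log_div hSp.ne' (hlamn (n - 1)).ne', Real.log_pow, e2]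
    ring
end
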